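/- Ekeland's variational principle: let X be a complete metric space, φ : X → ℝ ∪ {+∞} lower semicontinuous and bounded from below, x̄ ∈ dom φ, and ε > 0. Then there exists x̂ ∈ X such that φ(x̂) ≤ φ(x̄) and φ(x) + ε·d(x, x̂) ≥ φ(x̂) for all x ∈ X. -/

import Mathlib

open Filter Metric Set Topology

section EkelandAux

variable {X : Type*} [MetricSpace X]

private lemma ekeland_le_of_rel (φ : X → EReal) {ε : ℝ} (hε : 0 < ε) {y x : X}
    (h : φ x + ((ε * dist x y : ℝ) : EReal) ≤ φ y) : φ x ≤ φ y := by
  refine le_trans ?_ h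
  have h0 : (0 : EReal) ≤ ((ε * dist x y : ℝ) : EReal) := by
    exact_mod_cast mul_nonneg hε.le dist_nonneg
  calc φ x = φ x + 0 := by rw [add_zero]
    _ ≤ φ x + ((ε * dist x y : ℝ) : EReal) := add_le_add_right h0 _

private lemma ekeland_rel_refl (φ : X → EReal) (ε : ℝ) (y : X) :
    φ y + ((ε * dist y y : ℝ) : EReal) ≤ φ y := by
  simp

private lemma ekeland_rel_trans (φ : X → EReal) {ε : ℝ} (hε : 0 < ε) {y x z : X}
    (h1 : φ x + ((ε * dist x y : ℝ) : EReal) ≤ φ y)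
    (h2 : φ z + ((ε * dist z x : ℝ) : EReal) ≤ φ x) :
    φ z + ((ε * dist z y : ℝ) : EReal) ≤ φ y := by
  have htri : (((ε * dist z y : ℝ)) : EReal) ≤ ((ε * (dist z x + dist x y) : ℝ) : EReal) := by
    exact_mod_cast mul_le_mul_of_nonneg_left (dist_triangle z x y) hε.le
  calc φ z + ((ε * dist z y : ℝ) : EReal)
      ≤ φ z + ((ε * (dist z x + dist x y) : ℝ) : EReal) := add_le_add_right htri _
    _ = (φ z + ((ε * dist z x : ℝ) : EReal)) + ((ε * dist x y : ℝ) : EReal) := by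
        rw [mul_add, EReal.coe_add, add_assoc]
    _ ≤ φ x + ((ε * dist x y : ℝ) : EReal) := add_le_add_left h2 _
    _ ≤ φ y := h1

/-- Key step: for any `y` and `δ > 0`, pick an almost-minimizer of `φ` on the set
of points related to `y`. -/
private lemma ekeland_step (φ : X → EReal) {c : ℝ} (hc : ∀ x, (c : EReal) ≤ φ x)
    (ε : ℝ) (y : X) {δ : ℝ} (hδ : 0 < δ) :
    ∃ x : X, (φ x + ((ε * dist x y : ℝ) : EReal) ≤ φ y) ∧
      ∀ z : X, φ z + ((ε * dist z y : ℝ) : EReal) ≤ φ y → φ x ≤ φ z + (δ : EReal) := by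
  set T : Set X := {z | φ z + ((ε * dist z y : ℝ) : EReal) ≤ φ y} with hT
  have hyT : y ∈ T := ekeland_rel_refl φ ε y
  set I : EReal := sInf (φ '' T) with hI
  by_cases htop : I = ⊤
  · refine ⟨y, hyT, fun z hz => ?_⟩
    have : φ z = ⊤ := by
      have : I ≤ φ z := sInf_le ⟨z, hz, rfl⟩
      rw [htop] at this
      exact top_le_iff.1 this
    rw [this]
    simp [EReal.top_add_coe]
  · have hIbot : I ≠ ⊥ := by
      have : (c : EReal) ≤ I := le_sInf (by rintro _ ⟨z, -, rfl⟩; exact hc z)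
      exact fun h => by simp [h] at this
    have hIlt : I < I + (δ : EReal) := by
      obtain ⟨r, hr⟩ : ∃ r : ℝ, I = (r : EReal) := ⟨I.toReal, (EReal.coe_toReal htop hIbot).symm⟩
      rw [hr, ← EReal.coe_add, EReal.coe_lt_coe_iff]
      linarith
    have : ∃ a ∈ φ '' T, a < I + (δ : EReal) := sInf_lt_iff.1 hIlt
    obtain ⟨_, ⟨x, hxT, rfl⟩, hxlt⟩ := this
    refine ⟨x, hxT, fun z hz => ?_⟩
    have hIz : I ≤ φ z := sInf_le ⟨z, hz, rfl⟩
    exact hxlt.le.trans (add_le_add_left hIz _)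

end EkelandAux

/-- Ekeland's variational principle (Lemma 2.1): if `X` is a complete metric space,
`φ : X → ℝ ∪ {+∞}` is lower semicontinuous and bounded from below, `x₀ ∈ dom φ`,
and `ε > 0`, then there exists `x̂ ∈ X` with `φ(x̂) ≤ φ(x₀)` and
`φ(x) + ε d(x, x̂) ≥ φ(x̂)` for all `x ∈ X`. -/
theorem ekeland_variational_principle {X : Type*} [MetricSpace X] [CompleteSpace X]
    (φ : X → EReal) (hlsc : LowerSemicontinuous φ) (hbot : ∀ x, φ x ≠ ⊥)
    (hbdd : ∃ c : ℝ, ∀ x, (c : EReal) ≤ φ x)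
    (x₀ : X) (hdom : φ x₀ ≠ ⊤) (ε : ℝ) (hε : 0 < ε) :
    ∃ xh : X, φ xh ≤ φ x₀ ∧
      ∀ x : X, φ xh ≤ φ x + ((ε * dist x xh : ℝ) : EReal) := by
  obtain ⟨c, hc⟩ := hbdd
  -- build the sequence
  have hpow : ∀ n : ℕ, (0:ℝ) < (1/2 : ℝ)^n := fun n => by positivity
  let next : ℕ → X → X := fun n y => (ekeland_step φ hc ε y (hpow n)).choose
  let seq : ℕ → X := fun n => Nat.rec x₀ (fun k y => next k y) n
  have hseq0 : seq 0 = x₀ := rfl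
  have hseqS : ∀ n, seq (n+1) = next n (seq n) := fun n => rfl
  have h1 : ∀ n, φ (seq (n+1)) + ((ε * dist (seq (n+1)) (seq n) : ℝ) : EReal) ≤ φ (seq n) :=
    fun n => (ekeland_step φ hc ε (seq n) (hpow n)).choose_spec.1
  have h2 : ∀ n, ∀ z : X, φ z + ((ε * dist z (seq n) : ℝ) : EReal) ≤ φ (seq n) →
      φ (seq (n+1)) ≤ φ z + (((1/2:ℝ)^n : ℝ) : EReal) :=
    fun n => (ekeland_step φ hc ε (seq n) (hpow n)).choose_spec.2
  have hchain : ∀ n m, n ≤ m →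
      φ (seq m) + ((ε * dist (seq m) (seq n) : ℝ) : EReal) ≤ φ (seq n) := by
    intro n m hnm
    induction m, hnm using Nat.le_induction with
    | base => exact ekeland_rel_refl φ ε (seq n)
    | succ m hnm ih => exact ekeland_rel_trans φ hε ih (h1 m)
  -- Cauchy via summability of the step distances
  have hsum_bound : ∀ n : ℕ,
      ((∑ k ∈ Finset.range n, ε * dist (seq (k+1)) (seq k) : ℝ) : EReal) + φ (seq n) ≤ φ x₀ := by
    intro n
    induction n with
    | zero => simp [hseq0]
    | succ n ih =>
        have : ((∑ k ∈ Finset.range (n+1), ε * dist (seq (k+1)) (seq k) : ℝ) : EReal)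
            + φ (seq (n+1))
            = ((∑ k ∈ Finset.range n, ε * dist (seq (k+1)) (seq k) : ℝ) : EReal)
              + (φ (seq (n+1)) + ((ε * dist (seq (n+1)) (seq n) : ℝ) : EReal)) := by
          rw [Finset.sum_range_succ, EReal.coe_add, add_assoc,
            add_comm ((ε * dist (seq (n+1)) (seq n) : ℝ) : EReal)]
        rw [this]
        calc _ ≤ ((∑ k ∈ Finset.range n, ε * dist (seq (k+1)) (seq k) : ℝ) : EReal) + φ (seq n) :=
              add_le_add_right (h1 n) _
          _ ≤ φ x₀ := ih
  have hA : ∃ A : ℝ, φ x₀ = (A : EReal) := ⟨(φ x₀).toReal, (EReal.coe_toReal hdom (hbot x₀)).symm⟩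
  obtain ⟨A, hAeq⟩ := hA
  have hsum_real : ∀ n : ℕ, (∑ k ∈ Finset.range n, ε * dist (seq (k+1)) (seq k)) ≤ A - c := by
    intro n
    have := calc ((∑ k ∈ Finset.range n, ε * dist (seq (k+1)) (seq k) : ℝ) : EReal) + (c : EReal)
        ≤ ((∑ k ∈ Finset.range n, ε * dist (seq (k+1)) (seq k) : ℝ) : EReal) + φ (seq n) :=
          add_le_add_right (hc _) _
      _ ≤ φ x₀ := hsum_bound n
    rw [hAeq, ← EReal.coe_add, EReal.coe_le_coe_iff] at this
    linarith
  have hsummable : Summable (fun k => dist (seq (k+1)) (seq k)) := by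
    have h' : Summable (fun k => ε * dist (seq (k+1)) (seq k)) :=
      summable_of_sum_range_le (fun k => mul_nonneg hε.le dist_nonneg) hsum_real
    have := h'.div_const ε
    simpa [mul_div_assoc, mul_div_cancel_left₀ _ hε.ne'] using this
  have hcauchy : CauchySeq seq :=
    cauchySeq_of_dist_le_of_summable _ (fun n => by rw [dist_comm]) hsummable
  obtain ⟨xh, hxh⟩ := cauchySeq_tendsto_of_complete hcauchy
  -- the limit is related to every term of the sequence
  have hkey : ∀ n, φ xh + ((ε * dist xh (seq n) : ℝ) : EReal) ≤ φ (seq n) := by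
    intro n
    apply EReal.add_le_of_forall_lt
    intro a' ha' b' hb'
    induction b' with
    | bot => simp
    | top => exact absurd hb' not_top_lt
    | coe r =>
        have hr : r < ε * dist xh (seq n) := EReal.coe_lt_coe_iff.1 hb'
        have hev1 : ∀ᶠ m in atTop, a' < φ (seq m) :=
          hxh.eventually (hlsc xh a' ha')
        have hdist : Tendsto (fun m => ε * dist (seq m) (seq n)) atTop
            (nhds (ε * dist xh (seq n))) :=
          (tendsto_const_nhds.mul ((continuous_dist.comp
            (Continuous.prodMk continuous_id continuous_const)).continuousAt.tendsto.comp hxh))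
        have hev2 : ∀ᶠ m in atTop, r < ε * dist (seq m) (seq n) :=
          hdist.eventually (eventually_gt_nhds hr)
        have hev3 : ∀ᶠ m in atTop, n ≤ m := eventually_ge_atTop n
        obtain ⟨m, hm1, hm2, hm3⟩ := (hev1.and (hev2.and hev3)).exists
        calc a' + (r : EReal) ≤ φ (seq m) + ((ε * dist (seq m) (seq n) : ℝ) : EReal) :=
              (EReal.add_lt_add hm1 (EReal.coe_lt_coe_iff.2 hm2)).le
          _ ≤ φ (seq n) := hchain n m hm3
  refine ⟨xh, ?_, ?_⟩
  · have := ekeland_le_of_rel φ hε (hkey 0)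
    rwa [hseq0] at this
  · intro x
    by_contra hcon
    push_neg at hcon
    have hS : φ x + ((ε * dist x xh : ℝ) : EReal) ≤ φ xh := hcon.le
    have hxin : ∀ n, φ x + ((ε * dist x (seq n) : ℝ) : EReal) ≤ φ (seq n) :=
      fun n => ekeland_rel_trans φ hε (hkey n) hS
    have hmin : ∀ n, φ (seq (n+1)) ≤ φ x + (((1/2:ℝ)^n : ℝ) : EReal) :=
      fun n => h2 n x (hxin n)
    have hxh_le : ∀ n, φ xh ≤ φ (seq (n+1)) := fun n => ekeland_le_of_rel φ hε (hkey (n+1))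
    have hxtop : φ x ≠ ⊤ := by
      intro h
      rw [h, EReal.top_add_coe] at hcon
      exact not_top_lt hcon
    have hxreal : ∃ r : ℝ, φ x = (r : EReal) := ⟨(φ x).toReal, (EReal.coe_toReal hxtop (hbot x)).symm⟩
    obtain ⟨r, hreq⟩ := hxreal
    have hlt : ∀ n : ℕ, ε * dist x xh < (1/2:ℝ)^n := by
      intro n
      have := lt_of_lt_of_le hcon ((hxh_le n).trans (hmin n))
      rw [hreq, ← EReal.coe_add, ← EReal.coe_add, EReal.coe_lt_coe_iff] at this
      linarith
    have hd0 : ε * dist x xh ≤ 0 :=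
      ge_of_tendsto' (tendsto_pow_atTop_nhds_zero_of_lt_one (by norm_num) (by norm_num))
        (fun n => (hlt n).le)
    have hd : dist x xh = 0 := by nlinarith [dist_nonneg (x := x) (y := xh)]
    have hxeq : x = xh := dist_eq_zero.1 hd
    rw [hxeq] at hcon
    simp [dist_self] at hcon
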